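/- The set of totally positive matrices in N (real upper unitriangular 4×4 matrices with all 12 non-trivial minors positive) is closed under multiplication by elementary matrices with positive parameter: if X is totally positive and t > 0, then X·x_i(t) is totally positive for i = 1, 2, 3, where x_1(t) = I + tE_{12}, x_2(t) = I + tE_{23}, x_3(t) = I + tE_{34}. -/

import Mathlib

open Matrix

/-- All 12 non-trivial minors of a 4×4 upper unitriangular matrix are positive. -/
def TotallyPositive (X : Matrix (Fin 4) (Fin 4) ℝ) : Prop :=
  0 < X 0 1 ∧ 0 < X 1 2 ∧ 0 < X 2 3 ∧ 0 < X 0 2 ∧ 0 < X 1 3 ∧ 0 < X 0 3 ∧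
  0 < det !![X 0 1, X 0 2; X 1 1, X 1 2] ∧
  0 < det !![X 1 2, X 1 3; X 2 2, X 2 3] ∧
  0 < det !![X 0 1, X 0 3; X 1 1, X 1 3] ∧
  0 < det !![X 0 2, X 0 3; X 2 2, X 2 3] ∧
  0 < det !![X 0 2, X 0 3; X 1 2, X 1 3] ∧
  0 < det !![X 0 1, X 0 2, X 0 3; X 1 1, X 1 2, X 1 3; X 2 1, X 2 2, X 2 3]

/-- Total positivity of an explicit unitriangular matrix in terms of scalar inequalities. -/
lemma tp_lit (a b c d e f : ℝ) (ha : 0 < a) (hb : 0 < b) (hc : 0 < c)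
    (hd : 0 < d) (he : 0 < e) (hf : 0 < f)
    (m1 : 0 < a * d - b) (m2 : 0 < d * f - e) (m3 : 0 < a * e - c)
    (m4 : 0 < b * f - c) (m5 : 0 < b * e - c * d)
    (m6 : 0 < a * d * f - a * e - b * f + c) :
    TotallyPositive !![1, a, b, c; 0, 1, d, e; 0, 0, 1, f; 0, 0, 0, 1] := by
  unfold TotallyPositive
  norm_num [det_fin_two_of, det_fin_three, Matrix.cons_val_two, Matrix.cons_val_three, Matrix.vecHead, Matrix.vecTail]
  refine ⟨ha, hd, hf, hb, he, hc, ?_, ?_, ?_, ?_, ?_, ?_⟩ <;> nlinarith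

lemma mulE1 (a b c d e f t : ℝ) :
    (!![1, a, b, c; 0, 1, d, e; 0, 0, 1, f; 0, 0, 0, 1] : Matrix (Fin 4) (Fin 4) ℝ)
      * (1 + single 0 1 t) =
    !![1, a + t, b, c; 0, 1, d, e; 0, 0, 1, f; 0, 0, 0, 1] := by
  ext i j
  fin_cases i <;> fin_cases j <;>
    simp [Matrix.mul_apply, Fin.sum_univ_four, Matrix.one_apply, single_apply,
      Matrix.add_apply, Matrix.vecHead, Matrix.vecTail] <;> ring

lemma mulE2 (a b c d e f t : ℝ) :
    (!![1, a, b, c; 0, 1, d, e; 0, 0, 1, f; 0, 0, 0, 1] : Matrix (Fin 4) (Fin 4) ℝ)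
      * (1 + single 1 2 t) =
    !![1, a, b + t * a, c; 0, 1, d + t, e; 0, 0, 1, f; 0, 0, 0, 1] := by
  ext i j
  fin_cases i <;> fin_cases j <;>
    simp [Matrix.mul_apply, Fin.sum_univ_four, Matrix.one_apply, single_apply,
      Matrix.add_apply, Matrix.vecHead, Matrix.vecTail] <;> ring

lemma mulE3 (a b c d e f t : ℝ) :
    (!![1, a, b, c; 0, 1, d, e; 0, 0, 1, f; 0, 0, 0, 1] : Matrix (Fin 4) (Fin 4) ℝ)
      * (1 + single 2 3 t) =
    !![1, a, b, c + t * b; 0, 1, d, e + t * d; 0, 0, 1, f + t; 0, 0, 0, 1] := by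
  ext i j
  fin_cases i <;> fin_cases j <;>
    simp [Matrix.mul_apply, Fin.sum_univ_four, Matrix.one_apply, single_apply,
      Matrix.add_apply, Matrix.vecHead, Matrix.vecTail] <;> ring

set_option maxHeartbeats 1000000 in
theorem totally_positive_stable_under_elementary
    (X : Matrix (Fin 4) (Fin 4) ℝ)
    (hd : ∀ i, X i i = 1)
    (hl : ∀ i j : Fin 4, (j : ℕ) < (i : ℕ) → X i j = 0)
    (hX : TotallyPositive X) (t : ℝ) (ht : 0 < t) :
    TotallyPositive (X * (1 + single 0 1 t)) ∧
    TotallyPositive (X * (1 + single 1 2 t)) ∧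
    TotallyPositive (X * (1 + single 2 3 t)) := by
  obtain ⟨ha, hd2, hf, hb, he, hc, m1, m2, m3, m4, m5, m6⟩ := hX
  have h00 : X 0 0 = 1 := hd 0
  have h11 : X 1 1 = 1 := hd 1
  have h22 : X 2 2 = 1 := hd 2
  have h33 : X 3 3 = 1 := hd 3
  have h10 : X 1 0 = 0 := hl 1 0 (by decide)
  have h20 : X 2 0 = 0 := hl 2 0 (by decide)
  have h21 : X 2 1 = 0 := hl 2 1 (by decide)
  have h30 : X 3 0 = 0 := hl 3 0 (by decide)
  have h31 : X 3 1 = 0 := hl 3 1 (by decide)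
  have h32 : X 3 2 = 0 := hl 3 2 (by decide)
  simp only [det_fin_two_of, h11, h22, mul_one] at m1 m2 m3 m4 m5
  have m6' : 0 < X 0 1 * X 1 2 * X 2 3 - X 0 1 * X 1 3 - X 0 2 * X 2 3 + X 0 3 := by
    have := m6
    simp [det_fin_three, h11, h22, h21] at this
    nlinarith [this]
  have hXeq : X = !![1, X 0 1, X 0 2, X 0 3; 0, 1, X 1 2, X 1 3;
      0, 0, 1, X 2 3; 0, 0, 0, 1] := by
    ext i j
    fin_cases i <;> fin_cases j <;>
      simp_all [Matrix.vecHead, Matrix.vecTail]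
  have P1 : X * (1 + single 0 1 t) =
      !![1, X 0 1 + t, X 0 2, X 0 3; 0, 1, X 1 2, X 1 3; 0, 0, 1, X 2 3; 0, 0, 0, 1] := by
    rw [hXeq]; apply mulE1
  have P2 : X * (1 + single 1 2 t) =
      !![1, X 0 1, X 0 2 + t * X 0 1, X 0 3; 0, 1, X 1 2 + t, X 1 3;
         0, 0, 1, X 2 3; 0, 0, 0, 1] := by
    rw [hXeq]; apply mulE2
  have P3 : X * (1 + single 2 3 t) =
      !![1, X 0 1, X 0 2, X 0 3 + t * X 0 2; 0, 1, X 1 2, X 1 3 + t * X 1 2;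
         0, 0, 1, X 2 3 + t; 0, 0, 0, 1] := by
    rw [hXeq]; apply mulE3
  refine ⟨?_, ?_, ?_⟩
  · rw [P1]
    exact tp_lit _ _ _ _ _ _ (by linarith) hb hc hd2 he hf
      (by nlinarith [mul_pos ht hd2]) m2 (by nlinarith [mul_pos ht he]) m4 m5
      (by nlinarith [mul_pos ht m2])
  · rw [P2]
    exact tp_lit _ _ _ _ _ _ ha (by nlinarith [mul_pos ht ha]) hc (by linarith) he hf
      (by nlinarith) (by nlinarith [mul_pos ht hf]) m3
      (by nlinarith [mul_pos (mul_pos ht ha) hf]) (by nlinarith [mul_pos ht m3])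
      (by nlinarith [m6'])
  · rw [P3]
    exact tp_lit _ _ _ _ _ _ ha hb (by nlinarith [mul_pos ht hb])
      hd2 (by nlinarith [mul_pos ht hd2]) (by linarith)
      m1 (by nlinarith) (by nlinarith [mul_pos ht m1]) (by nlinarith) (by nlinarith)
      (by nlinarith [m6'])
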